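/- Let A ∈ ℝ^{m×n} and write A = B + C. Let Qᴸ = [Q₁ᴸ, Q₂ᴸ] ∈ ℝ^{m×m} and Qᵁ = [Q₁ᵁ, Q₂ᵁ] ∈ ℝ^{n×n} be orthogonal matrices with Q₁ᴸ ∈ ℝ^{m×k}, Q₁ᵁ ∈ ℝ^{n×k}, and assume (Q₂ᴸ)ᵀA = (Q₂ᴸ)ᵀC and A Q₂ᵁ = C Q₂ᵁ. Then ‖A − Q₁ᴸ(Q₁ᴸ)ᵀ A Q₁ᵁ(Q₁ᵁ)ᵀ‖_F ≤ ‖C‖_F. -/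

import Mathlib

open Matrix
noncomputable def specNorm {m n : Type*} [Fintype m] [Fintype n] [DecidableEq n]
    (A : Matrix m n ℝ) : ℝ :=
  ‖LinearMap.toContinuousLinearMap (Matrix.toEuclideanLin A)‖

noncomputable def frobNorm {m n : Type*} [Fintype m] [Fintype n]
    (A : Matrix m n ℝ) : ℝ :=
  Real.sqrt (∑ i, ∑ j, (A i j) ^ 2)

/-- The `j`-th largest singular value of `A` (1-indexed), characterized as the
distance in spectral norm from `A` to the set of matrices of rank `< j`. -/
noncomputable def sval {m n : Type*} [Fintype m] [Fintype n] [DecidableEq n]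
    (A : Matrix m n ℝ) (j : ℕ) : ℝ :=
  sInf { c | ∃ B : Matrix m n ℝ, B.rank < j ∧ specNorm (A - B) = c }

/-- Sum of squares of entries equals the trace of `Mᵀ * M`. -/
lemma sum_sq_eq_trace_transpose_mul {m n : ℕ} (M : Matrix (Fin m) (Fin n) ℝ) :
    ∑ i, ∑ j, (M i j) ^ 2 = Matrix.trace (Mᵀ * M) := by
  simp [Matrix.trace, Matrix.mul_apply, Matrix.diag, pow_two]
  exact Finset.sum_comm

/-- Frobenius-norm CUR error bound: with A = B + C, orthogonal
[Q₁ᴸ, Q₂ᴸ] and [Q₁ᵁ, Q₂ᵁ], (Q₂ᴸ)ᵀA = (Q₂ᴸ)ᵀC and AQ₂ᵁ = CQ₂ᵁ, we have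
‖A − Q₁ᴸ(Q₁ᴸ)ᵀ A Q₁ᵁ(Q₁ᵁ)ᵀ‖_F ≤ ‖C‖_F. -/
theorem cur_frobenius_error_bound {m n k m' n' : ℕ}
    (A B C : Matrix (Fin m) (Fin n) ℝ) (hABC : A = B + C)
    (Q1L : Matrix (Fin m) (Fin k) ℝ) (Q2L : Matrix (Fin m) (Fin m') ℝ)
    (Q1U : Matrix (Fin n) (Fin k) ℝ) (Q2U : Matrix (Fin n) (Fin n') ℝ)
    (hL1 : fromCols Q1L Q2L * (fromCols Q1L Q2L)ᵀ = 1)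
    (hL2 : (fromCols Q1L Q2L)ᵀ * fromCols Q1L Q2L = 1)
    (hU1 : fromCols Q1U Q2U * (fromCols Q1U Q2U)ᵀ = 1)
    (hU2 : (fromCols Q1U Q2U)ᵀ * fromCols Q1U Q2U = 1)
    (h2L : Q2Lᵀ * A = Q2Lᵀ * C)
    (h2U : A * Q2U = C * Q2U) :
    frobNorm (A - Q1L * Q1Lᵀ * A * Q1U * Q1Uᵀ) ≤ frobNorm C := by
  unfold frobNorm
  rw [transpose_fromCols, fromRows_mul_fromCols, ← fromBlocks_one] at hL2 hU2
  obtain ⟨hL11, hL12, hL21, hL22⟩ := fromBlocks_inj.mp hL2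
  obtain ⟨hU11, hU12, hU21, hU22⟩ := fromBlocks_inj.mp hU2
  rw [transpose_fromCols, fromCols_mul_fromRows] at hL1 hU1
  have eL11 : ∀ {p : ℕ} (X : Matrix (Fin k) (Fin p) ℝ), Q1Lᵀ * (Q1L * X) = X := by
    intro p X; rw [← Matrix.mul_assoc, hL11, Matrix.one_mul]
  have eL12 : ∀ {p : ℕ} (X : Matrix (Fin m') (Fin p) ℝ), Q1Lᵀ * (Q2L * X) = 0 := by
    intro p X; rw [← Matrix.mul_assoc, hL12, Matrix.zero_mul]
  have eL21 : ∀ {p : ℕ} (X : Matrix (Fin k) (Fin p) ℝ), Q2Lᵀ * (Q1L * X) = 0 := by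
    intro p X; rw [← Matrix.mul_assoc, hL21, Matrix.zero_mul]
  have eL22 : ∀ {p : ℕ} (X : Matrix (Fin m') (Fin p) ℝ), Q2Lᵀ * (Q2L * X) = X := by
    intro p X; rw [← Matrix.mul_assoc, hL22, Matrix.one_mul]
  set E : Matrix (Fin m) (Fin n) ℝ :=
    Q2L * (Q2Lᵀ * C) + Q1L * (Q1Lᵀ * (C * (Q2U * Q2Uᵀ))) with hE
  set F : Matrix (Fin m) (Fin n) ℝ :=
    Q1L * (Q1Lᵀ * (C * (Q1U * Q1Uᵀ))) with hF
  have hAE : A - Q1L * Q1Lᵀ * A * Q1U * Q1Uᵀ = E := by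
    have hP1 : Q1L * Q1Lᵀ = 1 - Q2L * Q2Lᵀ := eq_sub_of_add_eq hL1
    have hR1 : Q1U * Q1Uᵀ = 1 - Q2U * Q2Uᵀ := eq_sub_of_add_eq hU1
    have h2U' : A * (Q2U * Q2Uᵀ) = C * (Q2U * Q2Uᵀ) := by
      rw [← Matrix.mul_assoc, h2U, Matrix.mul_assoc]
    rw [hE, Matrix.mul_assoc (Q1L * Q1Lᵀ * A), ← Matrix.mul_assoc Q1L Q1Lᵀ, hP1, hR1]
    simp only [Matrix.sub_mul, Matrix.mul_sub, Matrix.one_mul, Matrix.mul_one,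
      Matrix.mul_assoc, h2L, h2U']
    abel
  rw [hAE]
  have hEtE : Eᵀ * E = Cᵀ * (Q2L * (Q2Lᵀ * C)) +
      (Q2U * Q2Uᵀ) * ((Cᵀ * (Q1L * (Q1Lᵀ * C))) * (Q2U * Q2Uᵀ)) := by
    simp only [hE, transpose_add, transpose_mul, transpose_transpose, Matrix.add_mul,
      Matrix.mul_add, Matrix.mul_assoc, eL11, eL12, eL21, eL22, Matrix.mul_zero,
      Matrix.zero_mul, add_zero, zero_add, Matrix.mul_one, Matrix.one_mul]
  have hFtF : Fᵀ * F = (Q1U * Q1Uᵀ) * ((Cᵀ * (Q1L * (Q1Lᵀ * C))) * (Q1U * Q1Uᵀ)) := by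
    simp only [hF, transpose_mul, transpose_transpose,
      Matrix.mul_assoc, eL11, eL12, eL21, eL22]
  have hR2idem : (Q2U * Q2Uᵀ) * (Q2U * Q2Uᵀ) = Q2U * Q2Uᵀ := by
    rw [Matrix.mul_assoc, ← Matrix.mul_assoc Q2Uᵀ, hU22, Matrix.one_mul]
  have hR1idem : (Q1U * Q1Uᵀ) * (Q1U * Q1Uᵀ) = Q1U * Q1Uᵀ := by
    rw [Matrix.mul_assoc, ← Matrix.mul_assoc Q1Uᵀ, hU11, Matrix.one_mul]
  set N : Matrix (Fin n) (Fin n) ℝ := Cᵀ * (Q1L * (Q1Lᵀ * C)) with hN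
  have tE : Matrix.trace (Eᵀ * E) =
      Matrix.trace (Cᵀ * (Q2L * (Q2Lᵀ * C))) + Matrix.trace (N * (Q2U * Q2Uᵀ)) := by
    rw [hEtE, Matrix.trace_add, Matrix.trace_mul_comm (Q2U * Q2Uᵀ),
      Matrix.mul_assoc, hR2idem]
  have tF : Matrix.trace (Fᵀ * F) = Matrix.trace (N * (Q1U * Q1Uᵀ)) := by
    rw [hFtF, Matrix.trace_mul_comm (Q1U * Q1Uᵀ), Matrix.mul_assoc, hR1idem]
  have tC : Matrix.trace (Cᵀ * C) =
      Matrix.trace (Eᵀ * E) + Matrix.trace (Fᵀ * F) := by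
    rw [tE, tF, add_assoc]
    have hNsum : Matrix.trace (N * (Q2U * Q2Uᵀ)) + Matrix.trace (N * (Q1U * Q1Uᵀ))
        = Matrix.trace N := by
      rw [← Matrix.trace_add, ← Matrix.mul_add, add_comm (Q2U * Q2Uᵀ), hU1, Matrix.mul_one]
    rw [hNsum, hN, Matrix.trace_mul_comm Cᵀ (Q2L * (Q2Lᵀ * C)),
      Matrix.trace_mul_comm Cᵀ (Q1L * (Q1Lᵀ * C)), ← Matrix.trace_add]
    have hsum : Q2L * (Q2Lᵀ * C) * Cᵀ + Q1L * (Q1Lᵀ * C) * Cᵀ = C * Cᵀ := by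
      calc Q2L * (Q2Lᵀ * C) * Cᵀ + Q1L * (Q1Lᵀ * C) * Cᵀ
          = Q2L * Q2Lᵀ * (C * Cᵀ) + Q1L * Q1Lᵀ * (C * Cᵀ) := by
            simp only [Matrix.mul_assoc]
        _ = (Q2L * Q2Lᵀ + Q1L * Q1Lᵀ) * (C * Cᵀ) := (Matrix.add_mul _ _ _).symm
        _ = 1 * (C * Cᵀ) := by rw [add_comm, hL1]
        _ = C * Cᵀ := Matrix.one_mul _
    rw [hsum, Matrix.trace_mul_comm]
  have hFnn : (0:ℝ) ≤ Matrix.trace (Fᵀ * F) := by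
    rw [← sum_sq_eq_trace_transpose_mul]
    exact Finset.sum_nonneg fun i _ => Finset.sum_nonneg fun j _ => sq_nonneg _
  have hle : ∑ i, ∑ j, (E i j) ^ 2 ≤ ∑ i, ∑ j, (C i j) ^ 2 := by
    rw [sum_sq_eq_trace_transpose_mul, sum_sq_eq_trace_transpose_mul C, tC]; linarith
  exact Real.sqrt_le_sqrt hle
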